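/- Let n be a positive integer, let b_1, …, b_n be nonzero complex numbers with b_{n+1-i} equal to the complex conjugate of b_i for all i = 1, …, n, and let z_1, …, z_n be distinct complex numbers of absolute value 1, none equal to 1, with z_{n+1-i} equal to the complex conjugate of z_i for all i = 1, …, n. Then liminf_{k→∞} ∑_{j=1}^n b_j z_j^k ≤ −(1/n) ∑_{j=1}^n |b_j|. -/

import Mathlib

open Complex Filter Finset ComplexConjugate

/-- Cesàro averages of powers of a unimodular number `u ≠ 1` tend to `0`. -/
private lemma cesaro_ne_one {u : ℂ} (hu : ‖u‖ = 1) (h1 : u ≠ 1) :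
    Tendsto (fun N : ℕ => ((N : ℂ))⁻¹ * ∑ k ∈ Finset.Icc 1 N, u ^ k) atTop (nhds 0) := by
  have hd : (0 : ℝ) < ‖u - 1‖ := by
    rw [norm_pos_iff]
    exact sub_ne_zero.2 h1
  have hbound : ∀ N : ℕ, ‖∑ k ∈ Finset.Icc 1 N, u ^ k‖ ≤ 2 / ‖u - 1‖ := by
    intro N
    have hre : ∑ k ∈ Finset.Icc 1 N, u ^ k = u * ((u ^ N - 1) / (u - 1)) := by
      rw [← Finset.Ico_add_one_right_eq_Icc, Finset.sum_Ico_eq_sum_range]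
      simp only [Nat.add_sub_cancel, Nat.succ_sub_one]
      rw [← geom_sum_eq h1 N, Finset.mul_sum]
      exact Finset.sum_congr rfl fun k _ => by ring
    have hu' : ‖u‖ = 1 := hu
    have hnum : ‖u ^ N - 1‖ ≤ 2 := by
      refine (norm_sub_le _ _).trans ?_
      have : ‖u ^ N‖ = 1 := by rw [norm_pow, hu', one_pow]
      rw [this]; norm_num
    rw [hre, norm_mul, norm_div, hu', one_mul]
    gcongr
  have h0 : Tendsto (fun N : ℕ => (N : ℝ)⁻¹ * (2 / ‖u - 1‖)) atTop (nhds 0) := by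
    have := (tendsto_inv_atTop_nhds_zero_nat (𝕜 := ℝ)).mul_const (2 / ‖u - 1‖)
    simpa using this
  apply squeeze_zero_norm ?_ h0
  intro N
  rw [norm_mul]
  gcongr
  · simp
  · exact hbound N

private lemma cesaro_one :
    Tendsto (fun N : ℕ => ((N : ℂ))⁻¹ * ∑ k ∈ Finset.Icc 1 N, (1 : ℂ) ^ k) atTop (nhds 1) := by
  refine Tendsto.congr' ?_ tendsto_const_nhds
  filter_upwards [eventually_ge_atTop 1] with N hN
  have hN' : (N : ℂ) ≠ 0 := Nat.cast_ne_zero.2 (by omega)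
  simp [Nat.card_Icc, inv_mul_cancel₀ hN']

private lemma cesaro {u : ℂ} (hu : ‖u‖ = 1) :
    Tendsto (fun N : ℕ => ((N : ℂ))⁻¹ * ∑ k ∈ Finset.Icc 1 N, u ^ k) atTop
      (nhds (if u = 1 then 1 else 0)) := by
  by_cases h1 : u = 1
  · subst h1; simpa using cesaro_one
  · simpa [h1] using cesaro_ne_one hu h1

/-- The key step: if the real parts are eventually at least `c`, then `c ≤ -|b i|`. -/
private lemma key_step (n : ℕ) (b z : ℕ → ℂ)
    (hb0 : ∀ i ∈ Finset.Icc 1 n, b i ≠ 0)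
    (hzabs : ∀ i ∈ Finset.Icc 1 n, ‖z i‖ = 1)
    (hz1 : ∀ i ∈ Finset.Icc 1 n, z i ≠ 1)
    (hzdist : Set.InjOn z (Set.Icc 1 n))
    (hreal : ∀ k : ℕ, (((∑ j ∈ Finset.Icc 1 n, b j * z j ^ k).re : ℂ))
      = ∑ j ∈ Finset.Icc 1 n, b j * z j ^ k)
    (i : ℕ) (hi : i ∈ Finset.Icc 1 n) (c : ℝ) (m : ℕ)
    (hc : ∀ k ≥ m, c ≤ (∑ j ∈ Finset.Icc 1 n, b j * z j ^ k).re) :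
    c ≤ -‖b i‖ := by
  have hbi : b i ≠ 0 := hb0 i hi
  have hzi : ‖z i‖ = 1 := hzabs i hi
  have hzi0 : z i ≠ 0 := fun h => by simp [h] at hzi
  set u : ℂ := b i * z i ^ m with hu_def
  have habsu : ‖u‖ = ‖b i‖ := by
    simp [hu_def, norm_mul, norm_pow, hzi]
  have habs_bi : (0 : ℝ) < ‖b i‖ := by
    simpa using hbi
  set w : ℂ := -conj u / (‖b i‖ : ℂ) with hw_def
  have habsw : ‖w‖ = 1 := by
    rw [hw_def, norm_div, norm_neg, Complex.norm_conj, habsu]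
    rw [Complex.norm_real, Real.norm_of_nonneg habs_bi.le, div_self habs_bi.ne']
  have habs_bi' : ((‖b i‖ : ℝ) : ℂ) ≠ 0 := by exact_mod_cast habs_bi.ne'
  have huw : u * w = -((‖b i‖ : ℂ)) := by
    rw [hw_def]
    field_simp
    rw [Complex.mul_conj, Complex.normSq_eq_norm_sq, habsu]
    push_cast
    ring
  set ζ : ℂ := conj (z i) with hζ_def
  have hζabs : ‖ζ‖ = 1 := by simp [hζ_def, hzi]
  have hζ1 : ζ ≠ 1 := by
    intro h
    apply hz1 i hi
    have := congrArg (starRingEnd ℂ) h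
    simpa [hζ_def] using this
  -- the complex averaged sequence
  set T : ℕ → ℂ := fun N => ((N : ℂ))⁻¹ *
    ∑ k ∈ Finset.Icc 1 N, ∑ j ∈ Finset.Icc 1 n, b j * z j ^ (k + m) * (1 + w * ζ ^ k)
    with hT_def
  -- rewrite T as a finite sum over j of products
  have hT_eq : ∀ N : ℕ, T N = ∑ j ∈ Finset.Icc 1 n, b j * z j ^ m *
      ((((N : ℂ))⁻¹ * ∑ k ∈ Finset.Icc 1 N, (z j) ^ k)
        + w * (((N : ℂ))⁻¹ * ∑ k ∈ Finset.Icc 1 N, (z j * ζ) ^ k)) := by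
    intro N
    simp only [hT_def]
    rw [Finset.sum_comm, Finset.mul_sum]
    refine Finset.sum_congr rfl fun j _ => ?_
    simp only [mul_add, Finset.mul_sum, ← Finset.sum_add_distrib]
    exact Finset.sum_congr rfl fun k _ => by rw [pow_add, mul_pow]; ring
  -- the limit of T
  have hT_lim : Tendsto T atTop (nhds (u * w)) := by
    have hlim : ∀ j ∈ Finset.Icc 1 n,
        Tendsto (fun N : ℕ => b j * z j ^ m *
          ((((N : ℂ))⁻¹ * ∑ k ∈ Finset.Icc 1 N, (z j) ^ k)
            + w * (((N : ℂ))⁻¹ * ∑ k ∈ Finset.Icc 1 N, (z j * ζ) ^ k)))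
          atTop (nhds (if j = i then u * w else 0)) := by
      intro j hj
      have h1 : Tendsto (fun N : ℕ => ((N : ℂ))⁻¹ * ∑ k ∈ Finset.Icc 1 N, (z j) ^ k)
          atTop (nhds 0) := cesaro_ne_one (hzabs j hj) (hz1 j hj)
      have habsjζ : ‖z j * ζ‖ = 1 := by
        rw [norm_mul, hzabs j hj, hζabs, one_mul]
      have hiff : (z j * ζ = 1) ↔ j = i := by
        constructor
        · intro h
          have hii : z i * ζ = 1 := by
            rw [hζ_def, Complex.mul_conj, Complex.normSq_eq_norm_sq, hzi]
            norm_num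
          have hζ0 : ζ ≠ 0 := fun hh => by simp [hh] at hζabs
          have hzz : z j = z i := by
            have := h.trans hii.symm
            exact mul_right_cancel₀ hζ0 this
          exact hzdist (by simpa [Set.mem_Icc] using Finset.mem_Icc.1 hj)
            (by simpa [Set.mem_Icc] using Finset.mem_Icc.1 hi) hzz
        · rintro rfl
          rw [hζ_def, Complex.mul_conj, Complex.normSq_eq_norm_sq, hzi]
          norm_num
      rcases eq_or_ne j i with h | h
      · have h2 : Tendsto (fun N : ℕ => ((N : ℂ))⁻¹ * ∑ k ∈ Finset.Icc 1 N, (z j * ζ) ^ k)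
            atTop (nhds 1) := by
          have hh := cesaro habsjζ
          rw [if_pos (hiff.2 h)] at hh
          exact hh
        have hmain := (h1.add (h2.const_mul w)).const_mul (b j * z j ^ m)
        rw [if_pos h]
        subst h
        have he : b j * z j ^ m * (0 + w * 1) = u * w := by rw [hu_def]; ring
        rw [he] at hmain
        exact hmain
      · have h2 : Tendsto (fun N : ℕ => ((N : ℂ))⁻¹ * ∑ k ∈ Finset.Icc 1 N, (z j * ζ) ^ k)
            atTop (nhds 0) := by
          have hh := cesaro habsjζ
          rw [if_neg (fun hhh => h (hiff.1 hhh))] at hh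
          exact hh
        have hmain := (h1.add (h2.const_mul w)).const_mul (b j * z j ^ m)
        rw [if_neg h]
        simpa using hmain
    have hsum := tendsto_finset_sum (Finset.Icc 1 n) hlim
    have hval : (∑ j ∈ Finset.Icc 1 n, if j = i then u * w else 0) = u * w := by
      rw [Finset.sum_ite_eq' (Finset.Icc 1 n) i (fun _ => u * w)]
      exact if_pos hi
    rw [hval] at hsum
    exact Tendsto.congr (fun N => (hT_eq N).symm) hsum
  -- real part of T, written with real coefficients
  have hT_re : ∀ N : ℕ, (T N).re = (N : ℝ)⁻¹ *
      ∑ k ∈ Finset.Icc 1 N, (∑ j ∈ Finset.Icc 1 n, b j * z j ^ (k + m)).re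
        * (1 + (w * ζ ^ k).re) := by
    intro N
    simp only [hT_def]
    have hcast : ((N : ℂ))⁻¹ = (((N : ℝ)⁻¹ : ℝ) : ℂ) := by push_cast; ring
    rw [hcast, Complex.re_ofReal_mul]
    congr 1
    rw [Complex.re_sum]
    refine Finset.sum_congr rfl fun k _ => ?_
    have hfac : (∑ j ∈ Finset.Icc 1 n, b j * z j ^ (k + m) * (1 + w * ζ ^ k))
        = (((∑ j ∈ Finset.Icc 1 n, b j * z j ^ (k + m)).re : ℂ)) * (1 + w * ζ ^ k) := by
      rw [← Finset.sum_mul, hreal (k + m)]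
    rw [hfac, Complex.re_ofReal_mul]
    congr 1
  -- the weights are nonnegative
  have ht_nonneg : ∀ k : ℕ, 0 ≤ 1 + (w * ζ ^ k).re := by
    intro k
    have h1 : |(w * ζ ^ k).re| ≤ 1 := by
      refine (Complex.abs_re_le_norm _).trans ?_
      rw [norm_mul, norm_pow, habsw, hζabs, one_pow, one_mul]
    linarith [(abs_le.1 h1).1]
  -- limit of the average of the weights
  have hwt_lim : Tendsto (fun N : ℕ => (N : ℝ)⁻¹ *
      ∑ k ∈ Finset.Icc 1 N, (1 + (w * ζ ^ k).re)) atTop (nhds 1) := by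
    have hz0 : Tendsto (fun N : ℕ => ((N : ℂ))⁻¹ * ∑ k ∈ Finset.Icc 1 N, ζ ^ k)
        atTop (nhds 0) := cesaro_ne_one hζabs hζ1
    have hz0' : Tendsto (fun N : ℕ => (w * (((N : ℂ))⁻¹ * ∑ k ∈ Finset.Icc 1 N, ζ ^ k)).re)
        atTop (nhds 0) := by
      have h := (Complex.continuous_re.tendsto (w * 0)).comp (hz0.const_mul w)
      rw [mul_zero, Complex.zero_re] at h
      exact h
    have hone : Tendsto (fun N : ℕ => (N : ℝ)⁻¹ * (N : ℝ)) atTop (nhds 1) := by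
      refine Tendsto.congr' ?_ tendsto_const_nhds
      filter_upwards [eventually_ge_atTop 1] with N hN
      have : (N : ℝ) ≠ 0 := Nat.cast_ne_zero.2 (by omega)
      simp [inv_mul_cancel₀ this]
    have hsum := hone.add hz0'
    rw [add_zero] at hsum
    refine Tendsto.congr (fun N => ?_) hsum
    have e1 : w * (((N : ℂ))⁻¹ * ∑ k ∈ Finset.Icc 1 N, ζ ^ k)
        = ((((N : ℝ))⁻¹ : ℝ) : ℂ) * ∑ k ∈ Finset.Icc 1 N, w * ζ ^ k := by
      simp only [Finset.mul_sum]
      push_cast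
      exact Finset.sum_congr rfl fun k _ => by ring
    rw [e1, Complex.re_ofReal_mul, Complex.re_sum, Finset.sum_add_distrib, mul_add,
      Finset.sum_const, Nat.card_Icc, Nat.add_sub_cancel, nsmul_eq_mul, mul_one]
  -- lower bound: c * avg weights ≤ Re (T N)
  have hineq : ∀ N : ℕ, c * ((N : ℝ)⁻¹ * ∑ k ∈ Finset.Icc 1 N, (1 + (w * ζ ^ k).re))
      ≤ (T N).re := by
    intro N
    rw [hT_re N]
    have e : c * ((N : ℝ)⁻¹ * ∑ k ∈ Finset.Icc 1 N, (1 + (w * ζ ^ k).re))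
        = (N : ℝ)⁻¹ * ∑ k ∈ Finset.Icc 1 N, c * (1 + (w * ζ ^ k).re) := by
      simp only [Finset.mul_sum]
      exact Finset.sum_congr rfl fun k _ => by ring
    rw [e]
    refine mul_le_mul_of_nonneg_left (Finset.sum_le_sum fun k hk => ?_) (by positivity)
    exact mul_le_mul_of_nonneg_right (hc (k + m) (Nat.le_add_left m k)) (ht_nonneg k)
  -- pass to the limit
  have hTre_lim : Tendsto (fun N => (T N).re) atTop (nhds (-‖b i‖)) := by
    have h := (Complex.continuous_re.tendsto _).comp hT_lim
    have : (u * w).re = -‖b i‖ := by rw [huw]; simp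
    rw [← this]
    exact h
  have hfin := le_of_tendsto_of_tendsto' (hwt_lim.const_mul c) hTre_lim hineq
  simpa using hfin

/-- **Corollary 1 (Beukers–Tijdeman).**
Under the hypotheses of Theorem 1,
`liminf_{k→∞} ∑ j, b j * z j ^ k ≤ -(1/n) ∑ j |b j|`. -/
theorem one_sided_power_sum_cor
    (n : ℕ) (hn : 1 ≤ n) (b z : ℕ → ℂ)
    (hb0 : ∀ i ∈ Finset.Icc 1 n, b i ≠ 0)
    (hbconj : ∀ i ∈ Finset.Icc 1 n, b (n + 1 - i) = conj (b i))
    (hzabs : ∀ i ∈ Finset.Icc 1 n, ‖z i‖ = 1)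
    (hz1 : ∀ i ∈ Finset.Icc 1 n, z i ≠ 1)
    (hzdist : Set.InjOn z (Set.Icc 1 n))
    (hzconj : ∀ i ∈ Finset.Icc 1 n, z (n + 1 - i) = conj (z i)) :
    Filter.liminf (fun k : ℕ => (∑ j ∈ Finset.Icc 1 n, b j * z j ^ k).re) Filter.atTop ≤
      -(1 / (n : ℝ)) * ∑ j ∈ Finset.Icc 1 n, ‖b j‖ := by
  -- the sums are real
  have hreal : ∀ k : ℕ, (((∑ j ∈ Finset.Icc 1 n, b j * z j ^ k).re : ℂ))
      = ∑ j ∈ Finset.Icc 1 n, b j * z j ^ k := by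
    intro k
    rw [← Complex.conj_eq_iff_re]
    rw [map_sum]
    refine Finset.sum_nbij' (fun j => n + 1 - j) (fun j => n + 1 - j) ?_ ?_ ?_ ?_ ?_
    · intro j hj
      rw [Finset.mem_Icc] at hj
      show n + 1 - j ∈ Finset.Icc 1 n
      rw [Finset.mem_Icc]
      omega
    · intro j hj
      rw [Finset.mem_Icc] at hj
      show n + 1 - j ∈ Finset.Icc 1 n
      rw [Finset.mem_Icc]
      omega
    · intro j hj
      rw [Finset.mem_Icc] at hj
      show n + 1 - (n + 1 - j) = j
      omega
    · intro j hj
      rw [Finset.mem_Icc] at hj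
      show n + 1 - (n + 1 - j) = j
      omega
    · intro j hj
      rw [map_mul, map_pow, ← hbconj j hj, ← hzconj j hj]
  set f : ℕ → ℝ := fun k => (∑ j ∈ Finset.Icc 1 n, b j * z j ^ k).re with hf_def
  set C : ℝ := ∑ j ∈ Finset.Icc 1 n, ‖b j‖ with hC_def
  have hlb : ∀ k, -C ≤ f k := by
    intro k
    have h1 : |f k| ≤ ‖∑ j ∈ Finset.Icc 1 n, b j * z j ^ k‖ :=
      Complex.abs_re_le_norm _
    have h2 : ‖∑ j ∈ Finset.Icc 1 n, b j * z j ^ k‖ ≤ C := by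
      refine (norm_sum_le _ _).trans ?_
      rw [hC_def]
      refine le_of_eq (Finset.sum_congr rfl fun j hj => ?_)
      rw [norm_mul, norm_pow, hzabs j hj, one_pow, mul_one]
    exact (abs_le.1 (h1.trans h2)).1
  have hkey : ∀ i ∈ Finset.Icc 1 n, Filter.liminf f Filter.atTop ≤ -‖b i‖ := by
    intro i hi
    rw [Filter.liminf_eq]
    refine csSup_le ⟨-C, Filter.Eventually.of_forall hlb⟩ ?_
    intro c hc
    simp only [Set.mem_setOf_eq, Filter.eventually_atTop] at hc
    obtain ⟨m, hm⟩ := hc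
    exact key_step n b z hb0 hzabs hz1 hzdist hreal i hi c m hm
  have hsumle : ∑ i ∈ Finset.Icc 1 n, Filter.liminf f Filter.atTop
      ≤ ∑ i ∈ Finset.Icc 1 n, -‖b i‖ := Finset.sum_le_sum hkey
  rw [Finset.sum_const, Nat.card_Icc, Nat.add_sub_cancel, nsmul_eq_mul] at hsumle
  have hsneg : ∑ i ∈ Finset.Icc 1 n, -‖b i‖ = -C := by
    rw [hC_def, ← Finset.sum_neg_distrib]
  rw [hsneg] at hsumle
  have hn' : (0 : ℝ) < n := by
    have : (1 : ℝ) ≤ (n : ℝ) := by exact_mod_cast hn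
    linarith
  have hgoal : -(1 / (n : ℝ)) * C = -C / n := by ring
  rw [hgoal, le_div_iff₀ hn']
  linarith [hsumle]
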